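/- Let K ⊆ ℝⁿ be nonempty and compact, W ⊆ ℝᵒ be compact, f ∈ emb(K,ℝᵐ) and g ∈ emb(W,ℝᵐ). Then for every r ∈ emb(f(K),ℝᵐ), one has B_{K,W}(f,g) ≤ sup_{y ∈ f(K)} ‖y − r(y)‖₂ + B_{K,W}(r∘f, g). -/
import Mathlib


open Set Function Filter MeasureTheory Topology
open scoped ENNReal NNReal

noncomputable section

abbrev Euc (n : ℕ) := EuclideanSpace ℝ (Fin n)

/-- `f` is a topological embedding of `A` into `B`: continuous and injective on `A`,
maps `A` into `B`, and its inverse is continuous on `f '' A`. -/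
def IsEmbOn {α β : Type*} [TopologicalSpace α] [TopologicalSpace β] [Nonempty α]
    (f : α → β) (A : Set α) (B : Set β) : Prop :=
  ContinuousOn f A ∧ A.InjOn f ∧ f '' A ⊆ B ∧
    ContinuousOn (Function.invFunOn f A) (f '' A)

/-- The embedding gap `B_{K,W}(f,g)`. -/
def embGap {n o m : ℕ} (f : Euc n → Euc m) (g : Euc o → Euc m)
    (K : Set (Euc n)) (W : Set (Euc o)) : ℝ≥0∞ :=
  ⨅ (r : Euc m → Euc m) (_ : IsEmbOn r (f '' K) (g '' W)),
    ⨆ y ∈ f '' K, edist y (r y)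

/-- The `(m,n,o)` manifold embedding property of `𝓔` w.r.t. `𝓕`. -/
def HasMEP {o n m : ℕ} (𝓔 : Set (Euc o → Euc m)) (𝓕 : Set (Euc n → Euc m)) : Prop :=
  ∀ K : Set (Euc n), K.Nonempty → IsCompact K → ∀ f ∈ 𝓕, ∀ ε : ℝ, 0 < ε →
    ∃ E ∈ 𝓔, ∃ W : Set (Euc o), IsCompact W ∧ embGap f E K W < ENNReal.ofReal ε

/-- Composition of two families of functions. -/
def compFam {α β γ : Type*} (H : Set (β → γ)) (G : Set (α → β)) : Set (α → γ) :=
  {e | ∃ h ∈ H, ∃ g ∈ G, e = h ∘ g}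

/-- The Wasserstein-2 distance with `ℓ²` ground metric. -/
def W2 {d : ℕ} (μ ν : Measure (Euc d)) : ℝ≥0∞ :=
  ⨅ (π : Measure (Euc d × Euc d)) (_ : IsProbabilityMeasure π)
    (_ : π.map Prod.fst = μ) (_ : π.map Prod.snd = ν),
    (∫⁻ p, edist p.1 p.2 ^ 2 ∂π) ^ (1 / 2 : ℝ)

/-- Distributional universality of a family of maps on `ℝⁿ`. -/
def DistUniv {n : ℕ} (𝓣 : Set (Euc n → Euc n)) : Prop :=
  ∀ μ' ν : Measure (Euc n), IsProbabilityMeasure μ' → IsProbabilityMeasure ν →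
    μ' ≪ volume →
    ∃ T : ℕ → (Euc n → Euc n), (∀ i, T i ∈ 𝓣) ∧
      ∀ φ : BoundedContinuousFunction (Euc n) ℝ,
        Tendsto (fun i => ∫ x, φ x ∂(μ'.map (T i))) atTop (𝓝 (∫ x, φ x ∂ν))

theorem embGap_le_add {n o m : ℕ} (K : Set (Euc n)) (W : Set (Euc o))
    (hKne : K.Nonempty) (hKc : IsCompact K) (hWc : IsCompact W)
    (f : Euc n → Euc m) (g : Euc o → Euc m)
    (hf : IsEmbOn f K Set.univ) (hg : IsEmbOn g W Set.univ)
    (r : Euc m → Euc m) (hr : IsEmbOn r (f '' K) Set.univ) :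
    embGap f g K W ≤ (⨆ y ∈ f '' K, edist y (r y)) + embGap (r ∘ f) g K W := by

  set A := f '' K with hA
  obtain ⟨hrc, hri, -, hrinv⟩ := hr
  rw [embGap, embGap, ENNReal.add_iInf]
  refine le_iInf fun s => ?_
  rw [ENNReal.add_iInf]
  refine le_iInf fun hs => ?_
  obtain ⟨hsc, hsi, hss, hsinv⟩ := hs
  have himg : (r ∘ f) '' K = r '' A := Set.image_comp r f K
  rw [himg] at hsc hsi hss hsinv ⊢
  have himg2 : s '' (r '' A) = (s ∘ r) '' A := (Set.image_comp s r A).symm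
  -- the composed embedding
  have hcomp : IsEmbOn (s ∘ r) A (g '' W) := by
    refine ⟨hsc.comp hrc (Set.mapsTo_image r A), ?_, ?_, ?_⟩
    · exact hsi.comp hri (Set.mapsTo_image r A)
    · rw [Set.image_comp]; exact hss
    · -- inverse continuity
      have hmaps : Set.MapsTo (Function.invFunOn s (r '' A)) (s '' (r '' A)) (r '' A) := by
        rintro z ⟨w, hw, rfl⟩
        exact Function.invFunOn_mem ⟨w, hw, rfl⟩
      have hcont : ContinuousOn (Function.invFunOn r A ∘ Function.invFunOn s (r '' A))
          ((s ∘ r) '' A) := by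
        rw [← himg2]
        exact hrinv.comp hsinv hmaps
      refine hcont.congr ?_
      rintro z ⟨y, hy, rfl⟩
      -- show invFunOn (s∘r) A (s (r y)) = invFunOn r A (invFunOn s (r '' A) (s (r y)))
      have h1 : Function.invFunOn s (r '' A) (s (r y)) = r y := by
        apply hsi (Function.invFunOn_mem ⟨r y, Set.mem_image_of_mem r hy, rfl⟩)
          (Set.mem_image_of_mem r hy)
        exact Function.invFunOn_eq ⟨r y, Set.mem_image_of_mem r hy, rfl⟩
      have h2 : Function.invFunOn r A (r y) = y := hri.leftInvOn_invFunOn hy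
      have h3 : Function.invFunOn (s ∘ r) A ((s ∘ r) y) = y :=
        (hsi.comp hri (Set.mapsTo_image r A)).leftInvOn_invFunOn hy
      simp only [Function.comp_apply] at h3 ⊢
      rw [h3, h1, h2]
  refine le_trans (iInf₂_le (s ∘ r) hcomp) ?_
  -- bound the sup
  have hsup2 : (⨆ z ∈ r '' A, edist z (s z)) = ⨆ y ∈ A, edist (r y) (s (r y)) := by
    rw [iSup_image]
  rw [hsup2]
  refine iSup₂_le fun y hy => ?_
  calc edist y ((s ∘ r) y) ≤ edist y (r y) + edist (r y) (s (r y)) := edist_triangle _ _ _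
    _ ≤ (⨆ y ∈ A, edist y (r y)) + ⨆ y ∈ A, edist (r y) (s (r y)) := by
        gcongr
        · exact le_iSup₂ (f := fun y (_ : y ∈ A) => edist y (r y)) y hy
        · exact le_iSup₂ (f := fun y (_ : y ∈ A) => edist (r y) (s (r y))) y hy
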